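/- arXiv:2312.14816 — 2 statements merged into one kernel-verified Lean document; each statement's English description precedes it below -/
import Mathlib

section
/- Let (X, ℬ) be a measurable space and let κ be a Markov transition kernel on X (so κ(x, X) = 1 for every x ∈ X). If a probability measure m on X is an extreme element of the set ℛ of all reversible probability measures for κ, then m is an extreme element of the set ℐ of all invariant probability measures for κ. -/
open MeasureTheory ProbabilityTheory

variable {X : Type*} [MeasurableSpace X]

/-- A function is bounded measurable. -/
def BddMeasurable {X : Type*} [MeasurableSpace X] (f : X → ℝ) : Prop :=
  Measurable f ∧ ∃ C : ℝ, ∀ x, |f x| ≤ C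

/-- The transition operator `T f (x) = ∫ f(y) κ(x, dy)`. -/
noncomputable def Tker {X : Type*} [MeasurableSpace X] (κ : Kernel X X) (f : X → ℝ) :
    X → ℝ :=
  fun x => ∫ y, f y ∂(κ x)

/-- `m` is an invariant measure: `∫ T f dm = ∫ f dm` for all bounded measurable `f`. -/
def IsInvariantMeas {X : Type*} [MeasurableSpace X] (κ : Kernel X X) (m : Measure X) : Prop :=
  ∀ f : X → ℝ, BddMeasurable f → ∫ x, Tker κ f x ∂m = ∫ x, f x ∂m

/-- `m` is a reversible measure: `∫ (T f) g dm = ∫ f (T g) dm`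
for all bounded measurable `f, g`. -/
def IsReversibleMeas {X : Type*} [MeasurableSpace X] (κ : Kernel X X) (m : Measure X) : Prop :=
  ∀ f g : X → ℝ, BddMeasurable f → BddMeasurable g →
    ∫ x, Tker κ f x * g x ∂m = ∫ x, f x * Tker κ g x ∂m

/-- `m` is a conservative measure: `∫ (T 1) g dm = ∫ g dm`
for all bounded measurable `g`, where `T 1 (x) = κ(x, X)`. -/
def IsConservativeMeas {X : Type*} [MeasurableSpace X] (κ : Kernel X X) (m : Measure X) :
    Prop :=
  ∀ g : X → ℝ, BddMeasurable g → ∫ x, (κ x Set.univ).toReal * g x ∂m = ∫ x, g x ∂m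

/-- `m` is an extreme element of a set `C` of measures: `m ∈ C` and whenever
`m = (1 - t) • m₀ + t • m₁` with `t ∈ (0,1)` and `m₀, m₁ ∈ C`, one has `m₀ = m₁`. -/
def IsExtremeElem {X : Type*} [MeasurableSpace X] (C : Set (Measure X)) (m : Measure X) :
    Prop :=
  m ∈ C ∧ ∀ t : ℝ, t ∈ Set.Ioo (0 : ℝ) 1 → ∀ m₀ m₁ : Measure X, m₀ ∈ C → m₁ ∈ C →
    m = ENNReal.ofReal (1 - t) • m₀ + ENNReal.ofReal t • m₁ → m₀ = m₁


namespace BddMeasurable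

variable {f g : X → ℝ}

lemma bound_nonneg (hf : BddMeasurable f) :
    ∃ C : ℝ, 0 ≤ C ∧ ∀ x, |f x| ≤ C := by
  obtain ⟨_, C, hC⟩ := hf
  exact ⟨max C 0, le_max_right _ _, fun x => (hC x).trans (le_max_left _ _)⟩

lemma integrable (hf : BddMeasurable f) (μ : Measure X) [IsFiniteMeasure μ] :
    Integrable f μ := by
  obtain ⟨hm, C, hC⟩ := hf
  exact ⟨hm.aestronglyMeasurable, HasFiniteIntegral.of_bounded (C := C)
    (Filter.Eventually.of_forall fun x => by simpa [Real.norm_eq_abs] using hC x)⟩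

lemma const (c : ℝ) : BddMeasurable (fun _ : X => c) :=
  ⟨measurable_const, |c|, fun _ => le_rfl⟩

lemma mul (hf : BddMeasurable f) (hg : BddMeasurable g) :
    BddMeasurable (fun x => f x * g x) := by
  obtain ⟨C, hC0, hC⟩ := hf.bound_nonneg
  obtain ⟨D, hD0, hD⟩ := hg.bound_nonneg
  exact ⟨hf.1.mul hg.1, C * D, fun x => by
    rw [abs_mul]; exact mul_le_mul (hC x) (hD x) (abs_nonneg _) hC0⟩

lemma sub (hf : BddMeasurable f) (hg : BddMeasurable g) :
    BddMeasurable (fun x => f x - g x) := by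
  obtain ⟨C, _, hC⟩ := hf.bound_nonneg
  obtain ⟨D, _, hD⟩ := hg.bound_nonneg
  exact ⟨hf.1.sub hg.1, C + D, fun x =>
    (abs_sub _ _).trans (add_le_add (hC x) (hD x))⟩

lemma add (hf : BddMeasurable f) (hg : BddMeasurable g) :
    BddMeasurable (fun x => f x + g x) := by
  obtain ⟨C, _, hC⟩ := hf.bound_nonneg
  obtain ⟨D, _, hD⟩ := hg.bound_nonneg
  exact ⟨hf.1.add hg.1, C + D, fun x =>
    (abs_add_le _ _).trans (add_le_add (hC x) (hD x))⟩

lemma tker (κ : Kernel X X) [IsMarkovKernel κ] (hf : BddMeasurable f) :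
    BddMeasurable (Tker κ f) := by
  obtain ⟨C, hC0, hC⟩ := hf.bound_nonneg
  refine ⟨(StronglyMeasurable.integral_kernel_prod_right'
    (f := fun p : X × X => f p.2) (hf.1.comp measurable_snd).stronglyMeasurable).measurable,
    C, fun x => ?_⟩
  have := norm_integral_le_of_norm_le_const (μ := κ x) (f := f) (C := C)
    (Filter.Eventually.of_forall fun y => by simpa [Real.norm_eq_abs] using hC y)
  simpa [Tker, Real.norm_eq_abs, measure_univ] using this

end BddMeasurable

lemma IsReversibleMeas.invariant {κ : Kernel X X} [IsMarkovKernel κ] {m : Measure X}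
    (hrev : IsReversibleMeas κ m) : IsInvariantMeas κ m := by
  intro f hf
  have h1 : BddMeasurable (fun _ : X => (1 : ℝ)) := BddMeasurable.const 1
  have := hrev f (fun _ => 1) hf h1
  simpa [Tker, measure_univ, mul_one] using this

lemma reversible_of_le_smul {κ : Kernel X X} [IsMarkovKernel κ] {m μ : Measure X}
    [IsProbabilityMeasure m] [IsProbabilityMeasure μ]
    (hrev : IsReversibleMeas κ m) (hinv : IsInvariantMeas κ μ)
    {c : ENNReal} (hc : c ≠ ⊤) (hle : μ ≤ c • m) : IsReversibleMeas κ μ := by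
  -- absolute continuity
  have hac : μ ≪ m := by
    refine Measure.AbsolutelyContinuous.mk fun s hs h0 => ?_
    have := Measure.le_iff'.1 hle s
    simp only [Measure.smul_apply, smul_eq_mul, h0, mul_zero] at this
    exact le_antisymm this bot_le
  -- a.e. bound on the density
  have hbd : μ.rnDeriv m ≤ᵐ[m] fun _ => c := by
    refine ae_le_of_forall_setLIntegral_le_of_sigmaFinite (Measure.measurable_rnDeriv μ m)
      fun s hs _ => ?_
    rw [Measure.setLIntegral_rnDeriv hac s, setLIntegral_const]
    have := Measure.le_iff'.1 hle s
    simpa [mul_comm] using this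
  set H : X → ℝ := fun x => min (μ.rnDeriv m x).toReal c.toReal with hHdef
  have hH : BddMeasurable H := by
    refine ⟨((Measure.measurable_rnDeriv μ m).ennreal_toReal).min measurable_const,
      c.toReal, fun x => ?_⟩
    rw [abs_of_nonneg (le_min ENNReal.toReal_nonneg ENNReal.toReal_nonneg)]
    exact min_le_right _ _
  have hHae : (fun x => (μ.rnDeriv m x).toReal) =ᵐ[m] H := by
    filter_upwards [hbd] with x hx
    exact (min_eq_left (ENNReal.toReal_mono hc hx)).symm
  -- key: integrals against μ are integrals against H · m
  have key : ∀ f : X → ℝ, BddMeasurable f → ∫ x, f x ∂μ = ∫ x, f x * H x ∂m := by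
    intro f hf
    rw [← MeasureTheory.integral_rnDeriv_smul hac (f := f)]
    refine integral_congr_ae ?_
    filter_upwards [hHae] with x hx
    rw [smul_eq_mul, ← hx, mul_comm]
  -- orthogonality: ∫ f (TH - H) dm = 0
  have horth : ∀ f : X → ℝ, BddMeasurable f → ∫ x, f x * (Tker κ H x - H x) ∂m = 0 := by
    intro f hf
    have h1 : ∫ x, Tker κ f x * H x ∂m = ∫ x, f x * H x ∂m := by
      rw [← key _ (hf.tker κ), hinv f hf, key f hf]
    have h2 := hrev f H hf hH
    have hfi : Integrable (fun x => f x * Tker κ H x) m := (hf.mul (hH.tker κ)).integrable m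
    have hgi : Integrable (fun x => f x * H x) m := (hf.mul hH).integrable m
    calc ∫ x, f x * (Tker κ H x - H x) ∂m
        = ∫ x, (f x * Tker κ H x - f x * H x) ∂m := by simp_rw [mul_sub]
      _ = (∫ x, f x * Tker κ H x ∂m) - ∫ x, f x * H x ∂m := integral_sub hfi hgi
      _ = 0 := by rw [← h2, h1, sub_self]
  -- TH = H a.e.
  have hTH : Tker κ H =ᵐ[m] H := by
    set D : X → ℝ := fun x => Tker κ H x - H x with hD
    have hDb : BddMeasurable D := (hH.tker κ).sub hH
    have h0 : ∫ x, D x * D x ∂m = 0 := horth D hDb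
    have hae : (fun x => D x * D x) =ᵐ[m] 0 := by
      rw [← integral_eq_zero_iff_of_nonneg (fun x => mul_self_nonneg (D x))
        ((hDb.mul hDb).integrable m)]
      exact h0
    filter_upwards [hae] with x hx
    have : D x = 0 := mul_self_eq_zero.mp hx
    simpa [hD, sub_eq_zero] using this
  -- m is invariant
  have hminv : IsInvariantMeas κ m := hrev.invariant
  -- the "Dirichlet form" G
  set G : X → ℝ := fun x =>
    Tker κ (fun y => H y * H y) x - 2 * H x * Tker κ H x + H x * H x with hG
  have hGpt : ∀ x, G x = ∫ y, (H y - H x) ^ 2 ∂(κ x) := by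
    intro x
    have i1 : Integrable (fun y => H y * H y) (κ x) := (hH.mul hH).integrable _
    have i2 : Integrable (fun y => 2 * H x * H y) (κ x) :=
      (hH.integrable (κ x)).const_mul _
    have i3 : Integrable (fun y => H y * H y - 2 * H x * H y) (κ x) := i1.sub i2
    calc G x = (∫ y, (H y * H y - 2 * H x * H y) ∂κ x) + H x * H x := by
          rw [integral_sub i1 i2, integral_const_mul]
          simp only [hG, Tker]
          try ring
      _ = ∫ y, (H y * H y - 2 * H x * H y + H x * H x) ∂κ x := by
          rw [integral_add i3 (integrable_const _), integral_const]
          simp [measure_univ]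
      _ = ∫ y, (H y - H x) ^ 2 ∂κ x := by congr 1; funext y; ring
  have hGnn : ∀ x, 0 ≤ G x := fun x => by
    rw [hGpt x]; exact integral_nonneg fun y => sq_nonneg _
  have hGbd : BddMeasurable G := by
    have h2H : BddMeasurable (fun x => 2 * H x * Tker κ H x) :=
      ((BddMeasurable.const 2).mul hH).mul (hH.tker κ)
    exact (((hH.mul hH).tker κ).sub h2H).add (hH.mul hH)
  -- ∫ G dm = 0
  have e1 : ∫ x, Tker κ (fun y => H y * H y) x ∂m = ∫ x, H x * H x ∂m :=
    hminv _ (hH.mul hH)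
  have e2 : ∫ x, 2 * H x * Tker κ H x ∂m = 2 * ∫ x, H x * H x ∂m := by
    rw [← integral_const_mul]
    refine integral_congr_ae ?_
    filter_upwards [hTH] with x hx
    rw [hx]; ring
  have hGint : ∫ x, G x ∂m = 0 := by
    have ia : Integrable (Tker κ (fun y => H y * H y)) m := ((hH.mul hH).tker κ).integrable m
    have ib : Integrable (fun x => 2 * H x * Tker κ H x) m :=
      (((BddMeasurable.const 2).mul hH).mul (hH.tker κ)).integrable m
    have iab : Integrable (fun x => Tker κ (fun y => H y * H y) x - 2 * H x * Tker κ H x) m :=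
      ia.sub ib
    have ic : Integrable (fun x => H x * H x) m := (hH.mul hH).integrable m
    simp only [hG]
    rw [integral_add iab ic, integral_sub ia ib, e1, e2]
    ring
  have hG0 : G =ᵐ[m] 0 :=
    (integral_eq_zero_iff_of_nonneg hGnn (hGbd.integrable m)).mp hGint
  -- local constancy: for a.e. x, H is κ(x,·)-a.e. equal to H x
  have hloc : ∀ᵐ x ∂m, ∀ᵐ y ∂(κ x), H y = H x := by
    filter_upwards [hG0] with x hx
    have h0 : ∫ y, (H y - H x) ^ 2 ∂(κ x) = 0 := by
      rw [← hGpt x]; exact hx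
    have hb : BddMeasurable (fun y => H y - H x) := hH.sub (BddMeasurable.const _)
    have hi : Integrable (fun y => (H y - H x) ^ 2) (κ x) := by
      have := (hb.mul hb).integrable (κ x)
      simpa [pow_two] using this
    have := (integral_eq_zero_iff_of_nonneg (fun y => sq_nonneg _) hi).mp h0
    filter_upwards [this] with y hy
    exact sub_eq_zero.mp (pow_eq_zero_iff two_ne_zero |>.mp hy)
  -- conclude reversibility of μ
  intro f g hf hg
  have hTf := hf.tker κ
  have hTg := hg.tker κ
  calc ∫ x, Tker κ f x * g x ∂μ
      = ∫ x, (Tker κ f x * g x) * H x ∂m := key _ (hTf.mul hg)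
    _ = ∫ x, Tker κ f x * (g x * H x) ∂m := by simp_rw [mul_assoc]
    _ = ∫ x, f x * Tker κ (fun y => g y * H y) x ∂m := hrev f _ hf (hg.mul hH)
    _ = ∫ x, f x * (Tker κ g x * H x) ∂m := by
        refine integral_congr_ae ?_
        filter_upwards [hloc] with x hx
        have : Tker κ (fun y => g y * H y) x = Tker κ g x * H x := by
          simp only [Tker]
          rw [show ∫ y, g y * H y ∂(κ x) = ∫ y, g y * H x ∂(κ x) from
            integral_congr_ae (hx.mono fun y hy => by simp only []; rw [hy]), integral_mul_const]
        rw [this]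
    _ = ∫ x, (f x * Tker κ g x) * H x ∂m := by simp_rw [mul_assoc]
    _ = ∫ x, f x * Tker κ g x ∂μ := (key _ (hf.mul hTg)).symm

lemma le_smul_of_decomp {m m₀ m₁ : Measure X} {a b : ENNReal} (ha : a ≠ 0) (ha' : a ≠ ⊤)
    (hdec : m = a • m₀ + b • m₁) : m₀ ≤ a⁻¹ • m := by
  refine Measure.le_iff'.2 fun s => ?_
  have h1 : a * m₀ s ≤ m s := by
    rw [hdec]
    simp only [Measure.coe_add, Pi.add_apply, Measure.smul_apply, smul_eq_mul]
    exact le_add_right le_rfl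
  calc m₀ s = a⁻¹ * (a * m₀ s) := by
        rw [← mul_assoc, ENNReal.inv_mul_cancel ha ha', one_mul]
    _ ≤ a⁻¹ * m s := mul_le_mul_right h1 _
    _ = (a⁻¹ • m) s := by simp


/-- If `κ` is a Markov kernel, then an extreme element of the set `ℛ` of reversible
probability measures is an extreme element of the set `ℐ` of invariant probability
measures. -/
theorem extreme_reversible_is_extreme_invariant
    (κ : Kernel X X) [IsMarkovKernel κ] (m : Measure X)
    (hm : IsExtremeElem {μ : Measure X | IsProbabilityMeasure μ ∧ IsReversibleMeas κ μ} m) :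
    IsExtremeElem {μ : Measure X | IsProbabilityMeasure μ ∧ IsInvariantMeas κ μ} m := by
  obtain ⟨⟨hmprob, hmrev⟩, hext⟩ := hm
  haveI := hmprob
  refine ⟨⟨hmprob, hmrev.invariant⟩, ?_⟩
  rintro t ⟨ht0, ht1⟩ m₀ m₁ ⟨h₀p, h₀i⟩ ⟨h₁p, h₁i⟩ hdec
  haveI := h₀p; haveI := h₁p
  have hs0 : ENNReal.ofReal (1 - t) ≠ 0 := by
    simp only [ne_eq, ENNReal.ofReal_eq_zero, not_le]; linarith
  have ht0' : ENNReal.ofReal t ≠ 0 := by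
    simp only [ne_eq, ENNReal.ofReal_eq_zero, not_le]; linarith
  have le0 : m₀ ≤ (ENNReal.ofReal (1 - t))⁻¹ • m :=
    le_smul_of_decomp hs0 ENNReal.ofReal_ne_top hdec
  have hdec' : m = ENNReal.ofReal t • m₁ + ENNReal.ofReal (1 - t) • m₀ := by
    rw [hdec, add_comm]
  have le1 : m₁ ≤ (ENNReal.ofReal t)⁻¹ • m :=
    le_smul_of_decomp ht0' ENNReal.ofReal_ne_top hdec'
  have rev0 : IsReversibleMeas κ m₀ :=
    reversible_of_le_smul hmrev h₀i (by simpa using hs0) le0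
  have rev1 : IsReversibleMeas κ m₁ :=
    reversible_of_le_smul hmrev h₁i (by simpa using ht0') le1
  exact hext t ⟨ht0, ht1⟩ m₀ m₁ ⟨h₀p, rev0⟩ ⟨h₁p, rev1⟩ hdec
end

section
/- Let (X, ℬ) be a measurable space, κ a sub-Markov transition kernel on X, m a conservative reversible probability measure for κ, and f : X → ℝ a bounded measurable function. If ∫_X (f(x) − (T f)(x))·f(x) m(dx) = 0, then f(x₀) = f(x₁) for σ_m-almost every pair (x₀, x₁) ∈ X × X. -/
open MeasureTheory ProbabilityTheory

variable {X : Type*} [MeasurableSpace X]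

lemma bdd_integrable' {α : Type*} [MeasurableSpace α] {μ : Measure α} [IsFiniteMeasure μ]
    {f : α → ℝ} (hm : Measurable f) {C : ℝ} (hC : ∀ x, |f x| ≤ C) : Integrable f μ :=
  (integrable_const C).mono' hm.aestronglyMeasurable
    (Filter.Eventually.of_forall fun x => by simpa using hC x)

lemma bdd_integrable {μ : Measure X} [IsFiniteMeasure μ] {f : X → ℝ}
    (hf : BddMeasurable f) : Integrable f μ := by
  obtain ⟨hm, C, hC⟩ := hf
  exact bdd_integrable' hm hC

lemma Tker_bdd (κ : Kernel X X) [IsFiniteKernel κ] (hκ : ∀ x, κ x Set.univ ≤ 1)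
    {f : X → ℝ} (hf : BddMeasurable f) : BddMeasurable (Tker κ f) := by
  obtain ⟨hm, C, hC⟩ := hf
  constructor
  · exact (StronglyMeasurable.integral_kernel_prod_right' (κ := κ)
      (f := fun p : X × X => f p.2) (hm.comp measurable_snd).stronglyMeasurable).measurable
  · refine ⟨C, fun x => ?_⟩
    have hC0 : 0 ≤ C := le_trans (abs_nonneg _) (hC x)
    calc |∫ y, f y ∂(κ x)| ≤ ∫ y, |f y| ∂(κ x) := by
          simpa [Real.norm_eq_abs] using
            norm_integral_le_integral_norm (μ := κ x) (f := f)
      _ ≤ ∫ _, C ∂(κ x) :=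
          integral_mono_of_nonneg (Filter.Eventually.of_forall fun y => abs_nonneg _)
            (integrable_const C) (Filter.Eventually.of_forall fun y => hC y)
      _ = (κ x Set.univ).toReal * C := by simp [mul_comm]; exact Or.inl rfl
      _ ≤ 1 * C := by
          refine mul_le_mul_of_nonneg_right ?_ hC0
          simpa using ENNReal.toReal_mono (by norm_num) (hκ x)
      _ = C := one_mul C

/-- Lemma 8, (c) implies (d): if `∫ (f - T f) f dm = 0`, then `f(x₀) = f(x₁)` for
σ_m-almost every pair `(x₀, x₁)`. -/
theorem lemma8_c_implies_d
    (κ : Kernel X X) [IsFiniteKernel κ] (hκ : ∀ x, κ x Set.univ ≤ 1)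
    (m : Measure X) [IsProbabilityMeasure m]
    (hcon : IsConservativeMeas κ m) (hrev : IsReversibleMeas κ m)
    (f : X → ℝ) (hf : BddMeasurable f)
    (hc : ∫ x, (f x - Tker κ f x) * f x ∂m = 0) :
    ∀ᵐ p : X × X ∂(m.compProd κ), f p.1 = f p.2 := by
  obtain ⟨hm, C0, hC0⟩ := id hf
  set C := max C0 0 with hCdef
  have hC : ∀ x, |f x| ≤ C := fun x => le_trans (hC0 x) (le_max_left _ _)
  have hCnn : 0 ≤ C := le_max_right _ _
  have hfb : BddMeasurable f := ⟨hm, C, hC⟩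
  have hf2 : BddMeasurable (fun x => f x ^ 2) := by
    refine ⟨hm.pow_const 2, C ^ 2, fun x => ?_⟩
    rw [abs_pow]
    exact pow_le_pow_left₀ (abs_nonneg _) (hC x) 2
  have hTf : BddMeasurable (Tker κ f) := Tker_bdd κ hκ hfb
  obtain ⟨hTm, D0, hD0⟩ := id hTf
  have hTf2 : BddMeasurable (Tker κ (fun x => f x ^ 2)) := Tker_bdd κ hκ hf2
  have hκm : Measurable fun x => (κ x Set.univ).toReal :=
    (κ.measurable_coe MeasurableSet.univ).ennreal_toReal
  have hκb : ∀ x, (κ x Set.univ).toReal ≤ 1 := fun x => by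
    simpa using ENNReal.toReal_mono (by norm_num) (hκ x)
  -- the squared-difference function on the product
  set g : X × X → ℝ := fun p => (f p.1 - f p.2) ^ 2 with hgdef
  have hgm : Measurable g := ((hm.comp measurable_fst).sub (hm.comp measurable_snd)).pow_const 2
  have hgb : ∀ p, |g p| ≤ (2 * C) ^ 2 := by
    intro p
    have h1 : |f p.1 - f p.2| ≤ 2 * C := by
      calc |f p.1 - f p.2| ≤ |f p.1| + |f p.2| := abs_sub _ _
        _ ≤ C + C := add_le_add (hC _) (hC _)
        _ = 2 * C := by ring
    calc |g p| = |f p.1 - f p.2| ^ 2 := by rw [hgdef]; rw [abs_pow, sq_abs, ← sq_abs]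
      _ ≤ (2 * C) ^ 2 := pow_le_pow_left₀ (abs_nonneg _) h1 2
  have hgint : Integrable g (m.compProd κ) := bdd_integrable' hgm hgb
  -- inner integral computation
  have hinner : ∀ x, ∫ y, g (x, y) ∂(κ x) =
      (κ x Set.univ).toReal * f x ^ 2 - 2 * (f x * Tker κ f x) + Tker κ (fun z => f z ^ 2) x := by
    intro x
    have h1 : Integrable f (κ x) := bdd_integrable' hm hC
    have h2 : Integrable (fun y => f y ^ 2) (κ x) := bdd_integrable' (hm.pow_const 2) hf2.2.choose_spec
    have e1 : (fun y => g (x, y)) = fun y => (f x ^ 2 - 2 * f x * f y) + f y ^ 2 := by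
      funext y; rw [hgdef]; ring
    rw [e1, integral_add (by exact (integrable_const _).sub (h1.const_mul _)) h2,
      integral_sub (integrable_const _) (h1.const_mul _), integral_const, integral_const_mul]
    simp only [smul_eq_mul, Tker, measureReal_def]
    ring
  -- integrabilities over m
  have hint1 : Integrable (fun x => (κ x Set.univ).toReal * f x ^ 2) m := by
    refine bdd_integrable' (hκm.mul (hm.pow_const 2)) (C := C ^ 2) fun x => ?_
    rw [abs_mul]
    calc |(κ x Set.univ).toReal| * |f x ^ 2| ≤ 1 * C ^ 2 := by
          refine mul_le_mul ?_ ?_ (abs_nonneg _) zero_le_one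
          · rw [abs_of_nonneg ENNReal.toReal_nonneg]; exact hκb x
          · rw [abs_pow]; exact pow_le_pow_left₀ (abs_nonneg _) (hC x) 2
      _ = C ^ 2 := one_mul _
  have hint2 : Integrable (fun x => f x * Tker κ f x) m := by
    refine bdd_integrable' (hm.mul hTm) (C := C * (max D0 0)) fun x => ?_
    rw [abs_mul]
    exact mul_le_mul (hC x) (le_trans (hD0 x) (le_max_left _ _)) (abs_nonneg _) hCnn
  have hint3 : Integrable (Tker κ (fun z => f z ^ 2)) m := bdd_integrable hTf2
  -- evaluate the three pieces
  have hA : ∫ x, (κ x Set.univ).toReal * f x ^ 2 ∂m = ∫ x, f x ^ 2 ∂m := hcon _ hf2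
  have hone : BddMeasurable (fun _ : X => (1 : ℝ)) := ⟨measurable_const, 1, fun _ => by norm_num⟩
  have hT1 : ∀ x, Tker κ (fun _ => (1 : ℝ)) x = (κ x Set.univ).toReal := fun x => by
    simp [Tker]; rfl
  have hCbit : ∫ x, Tker κ (fun z => f z ^ 2) x ∂m = ∫ x, f x ^ 2 ∂m := by
    have := hrev (fun z => f z ^ 2) (fun _ => (1 : ℝ)) hf2 hone
    simp only [mul_one, hT1] at this
    rw [this]
    calc ∫ x, f x ^ 2 * (κ x Set.univ).toReal ∂m
        = ∫ x, (κ x Set.univ).toReal * f x ^ 2 ∂m := by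
          congr 1; funext x; ring
      _ = ∫ x, f x ^ 2 ∂m := hA
  have hB : ∫ x, f x * Tker κ f x ∂m = ∫ x, f x ^ 2 ∂m := by
    have hff : Integrable (fun x => f x * f x) m :=
      bdd_integrable' (hm.mul hm) (C := C * C) fun x => by
        rw [abs_mul]; exact mul_le_mul (hC x) (hC x) (abs_nonneg _) hCnn
    have hTff : Integrable (fun x => Tker κ f x * f x) m :=
      bdd_integrable' (hTm.mul hm) (C := max D0 0 * C) fun x => by
        rw [abs_mul]
        exact mul_le_mul (le_trans (hD0 x) (le_max_left _ _)) (hC x) (abs_nonneg _)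
          (le_max_right _ _)
    have e : (fun x => (f x - Tker κ f x) * f x) = fun x => f x * f x - Tker κ f x * f x := by
      funext x; ring
    rw [e, integral_sub hff hTff, sub_eq_zero] at hc
    calc ∫ x, f x * Tker κ f x ∂m = ∫ x, Tker κ f x * f x ∂m := by
          congr 1; funext x; ring
      _ = ∫ x, f x * f x ∂m := hc.symm
      _ = ∫ x, f x ^ 2 ∂m := by congr 1; funext x; ring
  -- total integral is zero
  have htot : ∫ p, g p ∂(m.compProd κ) = 0 := by
    rw [Measure.integral_compProd hgint]
    calc ∫ x, ∫ y, g (x, y) ∂(κ x) ∂m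
        = ∫ x, ((κ x Set.univ).toReal * f x ^ 2 - 2 * (f x * Tker κ f x)
            + Tker κ (fun z => f z ^ 2) x) ∂m := by
          congr 1; funext x; exact hinner x
      _ = (∫ x, (κ x Set.univ).toReal * f x ^ 2 ∂m - ∫ x, 2 * (f x * Tker κ f x) ∂m)
            + ∫ x, Tker κ (fun z => f z ^ 2) x ∂m := by
          have hsub : Integrable
              (fun x => (κ x Set.univ).toReal * f x ^ 2 - 2 * (f x * Tker κ f x)) m :=
            hint1.sub (hint2.const_mul 2)
          rw [integral_add hsub hint3, integral_sub hint1 (hint2.const_mul 2)]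
      _ = 0 := by
          rw [hA, integral_const_mul, hB, hCbit]; ring
  have hae : g =ᵐ[m.compProd κ] 0 := by
    rw [← integral_eq_zero_iff_of_nonneg (fun p => sq_nonneg _) hgint] at *
    exact htot
  filter_upwards [hae] with p hp
  have : (f p.1 - f p.2) ^ 2 = 0 := hp
  have := pow_eq_zero_iff (n := 2) (by norm_num) |>.mp this
  linarith [this]
end
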